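/- Let λ be a Young diagram with row lengths λ_1 ≥ λ_2 ≥ … and column lengths λ'_1 ≥ λ'_2 ≥ …, let d be the number of diagonal boxes of λ (the number of indices i with λ_i ≥ i), and define the Frobenius coordinates p_i = λ_i − i and q_i = λ'_i − i for i = 1,…,d. For a box (i,j) ∈ λ let h_λ(i,j) = λ'_j − i + λ_i − j + 1 be its hook length. Then, as an identity of rational numbers, 1 / ∏_{(i,j)∈λ} h_λ(i,j) = (1 / ∏_{i=1}^{d} (p_i! · q_i!)) · det[ 1/(p_i + q_j + 1) ]_{i,j=1,…,d}. -/

import Mathlib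

open Finset

namespace HookAux

open Polynomial Matrix


private lemma pair_prod_erase {d : ℕ} (f : Fin d → Fin d → ℚ) :
    ∏ j, ∏ m ∈ univ.erase j, f m j =
      (∏ i, ∏ j ∈ Ioi i, f i j) * (∏ i, ∏ j ∈ Ioi i, f j i) := by
  have h1 : ∀ j : Fin d, (univ.erase j) = Iio j ∪ Ioi j := by
    intro j; ext m
    simp only [mem_erase, mem_union, mem_Iio, mem_Ioi, mem_univ, and_true]
    exact ne_iff_lt_or_gt
  have h2 : ∀ j : Fin d, Disjoint (Iio j) (Ioi j) := by
    intro j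
    exact Finset.disjoint_left.2 (by intro a ha ha'; simp at ha ha'; omega)
  calc ∏ j, ∏ m ∈ univ.erase j, f m j
      = ∏ j, ((∏ m ∈ Iio j, f m j) * (∏ m ∈ Ioi j, f m j)) := by
        refine Finset.prod_congr rfl fun j _ => ?_
        rw [h1 j, Finset.prod_union (h2 j)]
    _ = (∏ j, ∏ m ∈ Iio j, f m j) * (∏ j, ∏ m ∈ Ioi j, f m j) := Finset.prod_mul_distrib
    _ = (∏ i, ∏ j ∈ Ioi i, f i j) * (∏ i, ∏ j ∈ Ioi i, f j i) := by
        congr 1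
        exact Finset.prod_comm' (by intro j m; simp)

lemma cauchy_det {d : ℕ} (x y : Fin d → ℚ)
    (hxy : ∀ i j, x i + y j ≠ 0) (hy : Function.Injective y) :
    (∏ i, ∏ j, (x i + y j)) *
      Matrix.det (Matrix.of fun i j : Fin d => (x i + y j)⁻¹) =
    (∏ i, ∏ j ∈ Ioi i, (x j - x i)) * (∏ i, ∏ j ∈ Ioi i, (y j - y i)) := by
  rcases Nat.eq_zero_or_pos d with hd | hd
  · subst hd
    simp [Matrix.det_fin_zero]
  set Pp : Fin d → Polynomial ℚ := fun j => ∏ m ∈ univ.erase j, (X + C (y m)) with hPp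
  have hdeg : ∀ j, (Pp j).natDegree < d := by
    intro j
    have : (Pp j).natDegree = ∑ m ∈ univ.erase j, (X + C (y m)).natDegree := by
      apply Polynomial.natDegree_prod
      intro m _
      exact Polynomial.X_add_C_ne_zero (y m)
    rw [this]
    simp only [Polynomial.natDegree_X_add_C]
    rw [Finset.sum_const, smul_eq_mul, mul_one, Finset.card_erase_of_mem (mem_univ j),
      Finset.card_univ, Fintype.card_fin]
    omega
  set E : Matrix (Fin d) (Fin d) ℚ := Matrix.of (fun k j => (Pp j).coeff k) with hE
  have heval : ∀ (t : ℚ) (j : Fin d), ∑ k : Fin d, t ^ (k : ℕ) * E k j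
      = ∏ m ∈ univ.erase j, (t + y m) := by
    intro t j
    have h1 : Polynomial.eval t (Pp j) = ∑ k ∈ Finset.range d, (Pp j).coeff k * t ^ k :=
      Polynomial.eval_eq_sum_range' (hdeg j) t
    have h2 : Polynomial.eval t (Pp j) = ∏ m ∈ univ.erase j, (t + y m) := by
      rw [hPp]; simp [Polynomial.eval_prod]
    rw [← h2, h1, Finset.sum_range fun k => (Pp j).coeff k * t ^ k]
    exact Finset.sum_congr rfl fun k _ => by rw [mul_comm]; rfl
  have hME : Matrix.vandermonde x * E = Matrix.of (fun i j => ∏ m ∈ univ.erase j, (x i + y m)) := by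
    ext i j
    rw [Matrix.mul_apply]
    simpa [Matrix.vandermonde] using heval (x i) j
  have hDF : (Matrix.diagonal fun i => ∏ m, (x i + y m)) *
      (Matrix.of fun i j : Fin d => (x i + y j)⁻¹)
      = Matrix.of (fun i j => ∏ m ∈ univ.erase j, (x i + y m)) := by
    ext i j
    rw [Matrix.diagonal_mul]
    have : (∏ m, (x i + y m)) = (x i + y j) * ∏ m ∈ univ.erase j, (x i + y m) :=
      (Finset.mul_prod_erase univ _ (mem_univ j)).symm
    rw [Matrix.of_apply, Matrix.of_apply, this]
    exact mul_div_cancel_left₀ _ (hxy i j)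
  have hWE : Matrix.vandermonde (fun j => - y j) * E
      = Matrix.diagonal (fun j => ∏ m ∈ univ.erase j, (y m - y j)) := by
    ext j j'
    rw [Matrix.mul_apply]
    have hv := heval (- y j) j'
    simp only [Matrix.vandermonde_apply]
    by_cases h : j = j'
    · subst h
      rw [Matrix.diagonal_apply_eq, hv]
      exact Finset.prod_congr rfl fun m _ => by ring
    · rw [Matrix.diagonal_apply_ne _ h, hv]
      apply Finset.prod_eq_zero (Finset.mem_erase.2 ⟨h, mem_univ j⟩)
      ring
  have hdetDF := congrArg Matrix.det hDF
  have hdetME := congrArg Matrix.det hME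
  have hdetWE := congrArg Matrix.det hWE
  rw [Matrix.det_mul, Matrix.det_diagonal] at hdetDF hdetWE
  rw [Matrix.det_mul] at hdetME
  have hW : (Matrix.vandermonde fun j => - y j).det = ∏ i, ∏ j ∈ Ioi i, (y i - y j) := by
    rw [Matrix.det_vandermonde]
    exact Finset.prod_congr rfl fun i _ => Finset.prod_congr rfl fun j _ => by ring
  have hWne : (∏ i, ∏ j ∈ Ioi i, (y i - y j)) ≠ 0 := by
    apply Finset.prod_ne_zero_iff.2
    intro i _
    apply Finset.prod_ne_zero_iff.2
    intro j hj
    exact sub_ne_zero.2 (hy.ne (Finset.mem_Ioi.1 hj).ne)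
  have hpair := pair_prod_erase (fun m j => y m - y j)
  have hEdet : E.det = ∏ i, ∏ j ∈ Ioi i, (y j - y i) := by
    apply mul_left_cancel₀ hWne
    rw [← hW, hdetWE, hpair, hW]
  rw [hdetDF, ← hdetME, hEdet, Matrix.det_vandermonde]


/-- number of diagonal boxes -/
def dg (Y : YoungDiagram) : ℕ := (Y.cells.filter fun c => c.1 = c.2).card

/-- hook length -/
def hk (Y : YoungDiagram) (i j : ℕ) : ℕ := (Y.colLen j - i) + (Y.rowLen i - j) - 1

/-- Frobenius coordinates -/
def P (Y : YoungDiagram) (i : ℕ) : ℕ := Y.rowLen i - (i + 1)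
def Q (Y : YoungDiagram) (i : ℕ) : ℕ := Y.colLen i - (i + 1)

lemma diag_mem_iff (Y : YoungDiagram) (i : ℕ) : (i, i) ∈ Y ↔ i < dg Y := by
  set T : Finset ℕ := (Y.cells.filter fun c => c.1 = c.2).image Prod.fst with hT
  have hcard : T.card = dg Y := by
    rw [hT, dg]
    apply Finset.card_image_of_injOn
    intro c hc c' hc' h
    have hc2 := (Finset.mem_filter.1 hc).2
    have hc2' := (Finset.mem_filter.1 hc').2
    exact Prod.ext h (by rw [← hc2, ← hc2', h])
  have hmem : ∀ k, k ∈ T ↔ (k, k) ∈ Y := by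
    intro k
    constructor
    · intro hk
      rw [hT] at hk
      obtain ⟨c, hc, rfl⟩ := Finset.mem_image.1 hk
      simp only [Finset.mem_filter, YoungDiagram.mem_cells] at hc
      have : c = (c.1, c.1) := Prod.ext rfl hc.2.symm
      rw [this] at hc
      exact hc.1
    · intro hk
      rw [hT]
      exact Finset.mem_image.2 ⟨(k, k), Finset.mem_filter.2 ⟨(YoungDiagram.mem_cells _).2 hk, rfl⟩, rfl⟩
  have hdc : ∀ j k, j ≤ k → k ∈ T → j ∈ T := by
    intro j k hjk hkT
    exact (hmem j).2 (Y.up_left_mem hjk hjk ((hmem k).1 hkT))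
  have hsub : T ⊆ Finset.range T.card := by
    intro k hk
    rw [Finset.mem_range]
    by_contra h
    push_neg at h
    have : Finset.range (k + 1) ⊆ T := by
      intro j hj
      exact hdc j k (by simpa using Nat.lt_succ_iff.1 (Finset.mem_range.1 hj)) hk
    have := Finset.card_le_card this
    simp only [Finset.card_range] at this
    omega
  have hTeq : T = Finset.range T.card :=
    Finset.eq_of_subset_of_card_le hsub (by rw [Finset.card_range])
  rw [← hcard, ← hmem, hTeq, Finset.mem_range, Finset.card_range]

lemma rowLen_diag {Y : YoungDiagram} {i : ℕ} (h : i < dg Y) : Y.rowLen i = P Y i + (i + 1) := by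
  have := YoungDiagram.mem_iff_lt_rowLen.1 ((diag_mem_iff Y i).2 h)
  rw [P]; omega

lemma colLen_diag {Y : YoungDiagram} {i : ℕ} (h : i < dg Y) : Y.colLen i = Q Y i + (i + 1) := by
  have := YoungDiagram.mem_iff_lt_colLen.1 ((diag_mem_iff Y i).2 h)
  rw [Q]; omega

lemma P_anti {Y : YoungDiagram} {k l : ℕ} (hkl : k < l) (hl : l < dg Y) : P Y l < P Y k := by
  have h1 := Y.rowLen_anti k l hkl.le
  have h2 : l < Y.rowLen l := YoungDiagram.mem_iff_lt_rowLen.1 ((diag_mem_iff Y l).2 hl)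
  simp only [P]
  omega

lemma Q_anti {Y : YoungDiagram} {k l : ℕ} (hkl : k < l) (hl : l < dg Y) : Q Y l < Q Y k := by
  have h1 := Y.colLen_anti k l hkl.le
  have h2 : l < Y.colLen l := YoungDiagram.mem_iff_lt_colLen.1 ((diag_mem_iff Y l).2 hl)
  simp only [Q]
  omega

lemma hk_pos {Y : YoungDiagram} {i j : ℕ} (h : (i, j) ∈ Y) : 1 ≤ hk Y i j := by
  have h1 := YoungDiagram.mem_iff_lt_rowLen.1 h
  have h2 := YoungDiagram.mem_iff_lt_colLen.1 h
  rw [hk]; omega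



lemma nat_eq_of_lt_iff {a b : ℕ} (h : ∀ k, k < a ↔ k < b) : a = b := by
  rcases lt_trichotomy a b with hc | hc | hc
  · exact absurd ((h a).2 hc) (lt_irrefl a)
  · exact hc
  · exact absurd ((h b).1 hc) (lt_irrefl b)

lemma dg_transpose (Y : YoungDiagram) : dg Y.transpose = dg Y := by
  apply nat_eq_of_lt_iff
  intro k
  rw [← diag_mem_iff, ← diag_mem_iff, YoungDiagram.mem_transpose]
  rfl

lemma P_transpose (Y : YoungDiagram) (i : ℕ) : P Y.transpose i = Q Y i := by
  rw [P, Q, YoungDiagram.rowLen_transpose]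

lemma Q_transpose (Y : YoungDiagram) (i : ℕ) : Q Y.transpose i = P Y i := by
  rw [P, Q, YoungDiagram.colLen_transpose]

lemma hk_transpose (Y : YoungDiagram) (i j : ℕ) : hk Y.transpose i j = hk Y j i := by
  rw [hk, hk, YoungDiagram.rowLen_transpose, YoungDiagram.colLen_transpose]
  omega

/-- the diagram obtained by deleting the first row and column -/
def strip (Y : YoungDiagram) : YoungDiagram where
  cells := (Y.cells.filter fun c => c.1 ≠ 0 ∧ c.2 ≠ 0).image (fun c => (c.1 - 1, c.2 - 1))
  isLowerSet := by
    have key : ∀ c : ℕ × ℕ, c ∈ ((Y.cells.filter fun c => c.1 ≠ 0 ∧ c.2 ≠ 0).image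
        (fun c => (c.1 - 1, c.2 - 1))) ↔ (c.1 + 1, c.2 + 1) ∈ Y := by
      intro c
      simp only [Finset.mem_image, Finset.mem_filter, YoungDiagram.mem_cells]
      constructor
      · rintro ⟨⟨a, b⟩, ⟨hmem, ha, hb⟩, heq⟩
        have h1 : a - 1 = c.1 ∧ b - 1 = c.2 := Prod.mk_inj.1 heq
        have : a = c.1 + 1 ∧ b = c.2 + 1 := by omega
        rw [this.1, this.2] at hmem
        exact hmem
      · intro h
        exact ⟨(c.1 + 1, c.2 + 1), ⟨h, by simp, by simp⟩, by simp⟩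
    intro a b hba ha
    rw [Finset.mem_coe, key] at ha ⊢
    exact Y.up_left_mem (Nat.succ_le_succ hba.1) (Nat.succ_le_succ hba.2) ha

lemma strip_cells (Y : YoungDiagram) : (strip Y).cells
    = (Y.cells.filter fun c => c.1 ≠ 0 ∧ c.2 ≠ 0).image (fun c => (c.1 - 1, c.2 - 1)) := rfl

lemma mem_strip (Y : YoungDiagram) (i j : ℕ) : (i, j) ∈ strip Y ↔ (i + 1, j + 1) ∈ Y := by
  show (i, j) ∈ (strip Y).cells ↔ _
  show (i, j) ∈ (Y.cells.filter fun c => c.1 ≠ 0 ∧ c.2 ≠ 0).image (fun c => (c.1 - 1, c.2 - 1)) ↔ _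
  simp only [Finset.mem_image, Finset.mem_filter, YoungDiagram.mem_cells]
  constructor
  · rintro ⟨⟨a, b⟩, ⟨hmem, ha, hb⟩, heq⟩
    have h1 : a - 1 = i ∧ b - 1 = j := Prod.mk_inj.1 heq
    have : a = i + 1 ∧ b = j + 1 := by omega
    rw [this.1, this.2] at hmem
    exact hmem
  · intro h
    exact ⟨(i + 1, j + 1), ⟨h, by simp, by simp⟩, by simp⟩

lemma strip_rowLen (Y : YoungDiagram) (i : ℕ) :
    (strip Y).rowLen i = Y.rowLen (i + 1) - 1 := by
  apply nat_eq_of_lt_iff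
  intro k
  rw [← YoungDiagram.mem_iff_lt_rowLen, mem_strip]
  rw [YoungDiagram.mem_iff_lt_rowLen]
  omega

lemma strip_colLen (Y : YoungDiagram) (j : ℕ) :
    (strip Y).colLen j = Y.colLen (j + 1) - 1 := by
  apply nat_eq_of_lt_iff
  intro k
  rw [← YoungDiagram.mem_iff_lt_colLen, mem_strip]
  rw [YoungDiagram.mem_iff_lt_colLen]
  omega

lemma strip_dg (Y : YoungDiagram) : dg (strip Y) = dg Y - 1 := by
  apply nat_eq_of_lt_iff
  intro k
  rw [← diag_mem_iff, mem_strip, diag_mem_iff]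
  omega

lemma strip_P (Y : YoungDiagram) (i : ℕ) (h : i + 1 < dg Y) :
    P (strip Y) i = P Y (i + 1) := by
  have h2 : i + 1 < Y.rowLen (i + 1) :=
    YoungDiagram.mem_iff_lt_rowLen.1 ((diag_mem_iff Y (i + 1)).2 h)
  rw [P, P, strip_rowLen]
  omega

lemma strip_Q (Y : YoungDiagram) (i : ℕ) (h : i + 1 < dg Y) :
    Q (strip Y) i = Q Y (i + 1) := by
  have h2 : i + 1 < Y.colLen (i + 1) :=
    YoungDiagram.mem_iff_lt_colLen.1 ((diag_mem_iff Y (i + 1)).2 h)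
  rw [Q, Q, strip_colLen]
  omega

lemma hk_strip (Y : YoungDiagram) (i j : ℕ) (h : (i, j) ∈ strip Y) :
    hk (strip Y) i j = hk Y (i + 1) (j + 1) := by
  have hY : (i + 1, j + 1) ∈ Y := (mem_strip Y i j).1 h
  have h1 : j + 1 < Y.rowLen (i + 1) := YoungDiagram.mem_iff_lt_rowLen.1 hY
  have h2 : i + 1 < Y.colLen (j + 1) := YoungDiagram.mem_iff_lt_colLen.1 hY
  rw [hk, hk, strip_rowLen, strip_colLen]
  omega

lemma cells_split (Y : YoungDiagram) (h0 : (0, 0) ∈ Y) (f : ℕ × ℕ → ℚ) :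
    ∏ c ∈ Y.cells, f c =
      (∏ j ∈ range (Y.rowLen 0), f (0, j)) *
      (∏ i ∈ Ico 1 (Y.colLen 0), f (i, 0)) *
      (∏ c ∈ (strip Y).cells, f (c.1 + 1, c.2 + 1)) := by
  rw [← Finset.prod_filter_mul_prod_filter_not Y.cells (fun c => c.1 = 0) f]
  rw [← Finset.prod_filter_mul_prod_filter_not (Y.cells.filter fun c => ¬ c.1 = 0)
    (fun c => c.2 = 0) f, ← mul_assoc]
  congr 1
  congr 1
  · -- first row
    have e1 : Y.cells.filter (fun c => c.1 = 0) = (range (Y.rowLen 0)).image (fun j => (0, j)) := by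
      ext ⟨a, b⟩
      simp only [Finset.mem_filter, YoungDiagram.mem_cells, Finset.mem_image, Finset.mem_range,
        Prod.mk.injEq]
      constructor
      · rintro ⟨hab, rfl⟩
        exact ⟨b, YoungDiagram.mem_iff_lt_rowLen.1 hab, rfl, rfl⟩
      · rintro ⟨j, hj, rfl, rfl⟩
        exact ⟨YoungDiagram.mem_iff_lt_rowLen.2 hj, rfl⟩
    rw [e1, Finset.prod_image (fun a _ b _ h => by simpa using h)]
  · -- first column minus corner
    have e2 : (Y.cells.filter fun c => ¬ c.1 = 0).filter (fun c => c.2 = 0)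
        = (Ico 1 (Y.colLen 0)).image (fun i => (i, 0)) := by
      ext ⟨a, b⟩
      simp only [Finset.mem_filter, YoungDiagram.mem_cells, Finset.mem_image, Finset.mem_Ico,
        Prod.mk.injEq]
      constructor
      · rintro ⟨⟨hab, ha⟩, rfl⟩
        exact ⟨a, ⟨by omega, YoungDiagram.mem_iff_lt_colLen.1 hab⟩, rfl, rfl⟩
      · rintro ⟨i, hi, rfl, rfl⟩
        exact ⟨⟨YoungDiagram.mem_iff_lt_colLen.2 hi.2, by omega⟩, rfl⟩
    rw [e2, Finset.prod_image (fun a _ b _ h => by simpa using h)]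
  · -- interior
    have e3 : (Y.cells.filter fun c => ¬ c.1 = 0).filter (fun c => ¬ c.2 = 0)
        = (strip Y).cells.image (fun c => (c.1 + 1, c.2 + 1)) := by
      ext ⟨a, b⟩
      simp only [Finset.mem_filter, YoungDiagram.mem_cells, Finset.mem_image,
        Prod.mk.injEq]
      constructor
      · rintro ⟨⟨hab, ha⟩, hb⟩
        refine ⟨(a - 1, b - 1), ?_, by omega, by omega⟩
        rw [mem_strip]
        have : a - 1 + 1 = a ∧ b - 1 + 1 = b := by omega
        rw [this.1, this.2]
        exact hab
      · rintro ⟨⟨i, j⟩, hij, rfl, rfl⟩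
        rw [mem_strip] at hij
        exact ⟨⟨hij, by omega⟩, by omega⟩
    rw [e3, Finset.prod_image (fun a _ b _ h => by
      have := Prod.mk_inj.1 h
      exact Prod.ext (by omega) (by omega))]

lemma row0_prod (Y : YoungDiagram) (h0 : (0, 0) ∈ Y) :
    (∏ j ∈ range (Y.rowLen 0), hk Y 0 j) * (∏ k ∈ Ico 1 (dg Y), (P Y 0 - P Y k))
    = (P Y 0).factorial * ∏ k ∈ range (dg Y), (P Y 0 + Q Y k + 1) := by
  have hd : 0 < dg Y := (diag_mem_iff Y 0).1 h0
  have hr0 : Y.rowLen 0 = P Y 0 + 1 := by simpa using rowLen_diag hd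
  -- basic facts about cells of the first row
  have hcol : ∀ j, j < Y.rowLen 0 → 1 ≤ Y.colLen j := by
    intro j hj
    exact YoungDiagram.mem_iff_lt_colLen.1 (YoungDiagram.mem_iff_lt_rowLen.2 hj)
  -- the four finsets
  set S : Finset ℕ := (range (Y.rowLen 0)).image (fun j => hk Y 0 j) with hS
  set T : Finset ℕ := (Ico 1 (dg Y)).image (fun k => P Y 0 - P Y k) with hT
  set U : Finset ℕ := (range (dg Y)).image (fun k => P Y 0 + Q Y k + 1) with hU
  set V : Finset ℕ := Ico 1 (P Y 0 + 1) with hV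
  -- injectivity
  have hkanti : ∀ j1 j2, j1 < j2 → j2 < Y.rowLen 0 → hk Y 0 j2 < hk Y 0 j1 := by
    intro j1 j2 h12 h2
    have c1 := hcol j1 (h12.trans h2)
    have c2 := hcol j2 h2
    have hca := Y.colLen_anti j1 j2 h12.le
    simp only [hk]
    omega
  have hSinj : Set.InjOn (fun j => hk Y 0 j) (range (Y.rowLen 0)) := by
    intro a ha b hb hab
    simp only [coe_range, Set.mem_Iio] at ha hb
    rcases lt_trichotomy a b with h | h | h
    · exact absurd hab (hkanti a b h hb).ne'
    · exact h
    · exact absurd hab (hkanti b a h ha).ne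
  have hTinj : Set.InjOn (fun k => P Y 0 - P Y k) (Ico 1 (dg Y)) := by
    intro a ha b hb hab
    simp only [coe_Ico, Set.mem_Ico] at ha hb
    have hpa : P Y a < P Y 0 := P_anti ha.1 ha.2
    have hpb : P Y b < P Y 0 := P_anti hb.1 hb.2
    rcases lt_trichotomy a b with h | h | h
    · have := P_anti h hb.2; simp only at hab; omega
    · exact h
    · have := P_anti h ha.2; simp only at hab; omega
  have hUinj : Set.InjOn (fun k => P Y 0 + Q Y k + 1) (range (dg Y)) := by
    intro a ha b hb hab
    simp only [coe_range, Set.mem_Iio] at ha hb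
    rcases lt_trichotomy a b with h | h | h
    · have := Q_anti h hb; simp only at hab; omega
    · exact h
    · have := Q_anti h ha; simp only at hab; omega
  -- cardinalities
  have cardS : S.card = P Y 0 + 1 := by
    rw [hS, Finset.card_image_of_injOn hSinj, card_range, hr0]
  have cardT : T.card = dg Y - 1 := by
    rw [hT, Finset.card_image_of_injOn hTinj, Nat.card_Ico]
  have cardU : U.card = dg Y := by
    rw [hU, Finset.card_image_of_injOn hUinj, card_range]
  have cardV : V.card = P Y 0 := by rw [hV, Nat.card_Ico]; omega
  -- subset
  have hsub : S ∪ T ⊆ V ∪ U := by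
    intro x hx
    rcases Finset.mem_union.1 hx with hx | hx
    · obtain ⟨j, hj, rfl⟩ := Finset.mem_image.1 hx
      rw [Finset.mem_range] at hj
      have hc1 := hcol j hj
      by_cases hjd : j < dg Y
      · refine Finset.mem_union_right _ (Finset.mem_image.2 ⟨j, Finset.mem_range.2 hjd, ?_⟩)
        have := colLen_diag hjd
        simp only [hk]
        omega
      · refine Finset.mem_union_left _ ?_
        have hnd : Y.colLen j ≤ j := by
          by_contra h
          push_neg at h
          exact hjd ((diag_mem_iff Y j).1 (YoungDiagram.mem_iff_lt_colLen.2 h))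
        have hpos : 1 ≤ hk Y 0 j := hk_pos (YoungDiagram.mem_iff_lt_rowLen.2 hj)
        rw [hV, Finset.mem_Ico]
        simp only [hk] at hpos ⊢
        omega
    · obtain ⟨k, hkm, rfl⟩ := Finset.mem_image.1 hx
      rw [Finset.mem_Ico] at hkm
      have := P_anti hkm.1 hkm.2
      refine Finset.mem_union_left _ ?_
      rw [hV, Finset.mem_Ico]
      omega
  -- disjointness
  have hdST : Disjoint S T := by
    rw [Finset.disjoint_left]
    rintro x hx hx'
    obtain ⟨j, hj, rfl⟩ := Finset.mem_image.1 hx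
    obtain ⟨k, hkm, heq⟩ := Finset.mem_image.1 hx'
    rw [Finset.mem_range] at hj
    rw [Finset.mem_Ico] at hkm
    have hc1 := hcol j hj
    have hrk := rowLen_diag hkm.2
    have hPk : P Y k < P Y 0 := P_anti hkm.1 hkm.2
    simp only [hk] at heq
    by_cases hmem : (k, j) ∈ Y
    · have m1 := YoungDiagram.mem_iff_lt_rowLen.1 hmem
      have m2 := YoungDiagram.mem_iff_lt_colLen.1 hmem
      omega
    · have m1 : ¬ j < Y.rowLen k := fun h => hmem (YoungDiagram.mem_iff_lt_rowLen.2 h)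
      have m2 : ¬ k < Y.colLen j := fun h => hmem (YoungDiagram.mem_iff_lt_colLen.2 h)
      omega
  have hdVU : Disjoint V U := by
    rw [Finset.disjoint_left]
    rintro x hx hx'
    obtain ⟨k, _, rfl⟩ := Finset.mem_image.1 hx'
    rw [hV, Finset.mem_Ico] at hx
    omega
  -- set equality
  have hcards : (V ∪ U).card ≤ (S ∪ T).card := by
    rw [Finset.card_union_of_disjoint hdST, Finset.card_union_of_disjoint hdVU,
      cardS, cardT, cardU, cardV]
    omega
  have hseteq : S ∪ T = V ∪ U := Finset.eq_of_subset_of_card_le hsub hcards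
  -- conclude via products
  have hprod : (∏ x ∈ S, x) * (∏ x ∈ T, x) = (∏ x ∈ V, x) * (∏ x ∈ U, x) := by
    rw [← Finset.prod_union hdST, ← Finset.prod_union hdVU, hseteq]
  rw [hS, hT, hU, hV] at hprod
  rw [Finset.prod_image hSinj, Finset.prod_image hTinj, Finset.prod_image hUinj] at hprod
  rwa [Finset.prod_Ico_id_eq_factorial] at hprod

lemma col0_prod (Y : YoungDiagram) (h0 : (0, 0) ∈ Y) :
    (∏ i ∈ range (Y.colLen 0), hk Y i 0) * (∏ k ∈ Ico 1 (dg Y), (Q Y 0 - Q Y k))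
    = (Q Y 0).factorial * ∏ k ∈ range (dg Y), (P Y k + Q Y 0 + 1) := by
  have h0t : (0, 0) ∈ Y.transpose := by
    rw [YoungDiagram.mem_transpose]; exact h0
  have h := row0_prod Y.transpose h0t
  rw [YoungDiagram.rowLen_transpose, dg_transpose] at h
  simp only [P_transpose, Q_transpose, hk_transpose] at h
  rw [h]
  congr 1
  exact Finset.prod_congr rfl fun k _ => by omega

lemma main_identity : ∀ (n : ℕ) (Y : YoungDiagram), Y.cells.card ≤ n →
    (∏ c ∈ Y.cells, (hk Y c.1 c.2 : ℚ)) *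
      (∏ k ∈ range (dg Y), ∏ l ∈ range k,
        (((P Y l : ℚ) - (P Y k : ℚ)) * ((Q Y l : ℚ) - (Q Y k : ℚ))))
    = (∏ k ∈ range (dg Y), (((P Y k).factorial : ℚ) * ((Q Y k).factorial : ℚ))) *
      ∏ k ∈ range (dg Y), ∏ l ∈ range (dg Y), ((P Y k : ℚ) + (Q Y l : ℚ) + 1) := by
  intro n
  induction n with
  | zero =>
    intro Y hY
    have hempty : Y.cells = ∅ := Finset.card_eq_zero.1 (Nat.le_zero.1 hY)
    have hdg : dg Y = 0 := by
      rw [dg, hempty]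
      simp
    rw [hempty, hdg]
    simp
  | succ n ih =>
    intro Y hY
    by_cases h0 : (0, 0) ∈ Y
    case neg =>
      have hempty : Y.cells = ∅ := by
        ext c
        simp only [Finset.notMem_empty, iff_false]
        intro hc
        exact h0 (Y.up_left_mem (Nat.zero_le _) (Nat.zero_le _) ((YoungDiagram.mem_cells c).1 hc))
      have hdg : dg Y = 0 := by
        rw [dg, hempty]; simp
      rw [hempty, hdg]
      simp
    case pos =>
    -- setup
    have hd1 : 0 < dg Y := (diag_mem_iff Y 0).1 h0
    obtain ⟨d', hd'⟩ : ∃ d', dg Y = d' + 1 := ⟨dg Y - 1, by omega⟩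
    have hdg' : dg (strip Y) = d' := by rw [strip_dg]; omega
    -- strip has smaller card
    have hcard' : (strip Y).cells.card ≤ n := by
      have h1 : (strip Y).cells.card ≤ (Y.cells.filter fun c => c.1 ≠ 0 ∧ c.2 ≠ 0).card := by
        rw [strip_cells]; exact Finset.card_image_le
      have h2 : (Y.cells.filter fun c => c.1 ≠ 0 ∧ c.2 ≠ 0).card < Y.cells.card := by
        apply Finset.card_lt_card
        rw [Finset.ssubset_iff_of_subset (Finset.filter_subset _ _)]
        exact ⟨(0, 0), (YoungDiagram.mem_cells _).2 h0, by simp⟩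
      omega
    have ihY' := ih (strip Y) hcard'
    rw [hdg'] at ihY'
    -- convert strip quantities to Y quantities in the IH
    have eH : (∏ c ∈ (strip Y).cells, (hk (strip Y) c.1 c.2 : ℚ))
        = ∏ c ∈ (strip Y).cells, (hk Y (c.1 + 1) (c.2 + 1) : ℚ) := by
      refine Finset.prod_congr rfl fun c hc => ?_
      rw [hk_strip Y c.1 c.2 ((YoungDiagram.mem_cells c).1 hc)]
    have eA : (∏ k ∈ range d', ∏ l ∈ range k,
          (((P (strip Y) l : ℚ) - (P (strip Y) k : ℚ)) * ((Q (strip Y) l : ℚ) - (Q (strip Y) k : ℚ))))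
        = ∏ k ∈ range d', ∏ l ∈ range k,
          (((P Y (l+1) : ℚ) - (P Y (k+1) : ℚ)) * ((Q Y (l+1) : ℚ) - (Q Y (k+1) : ℚ))) := by
      refine Finset.prod_congr rfl fun k hk => Finset.prod_congr rfl fun l hl => ?_
      rw [Finset.mem_range] at hk hl
      rw [strip_P Y k (by omega), strip_P Y l (by omega), strip_Q Y k (by omega),
        strip_Q Y l (by omega)]
    have eB : (∏ k ∈ range d', (((P (strip Y) k).factorial : ℚ) * ((Q (strip Y) k).factorial : ℚ)))
        = ∏ k ∈ range d', (((P Y (k+1)).factorial : ℚ) * ((Q Y (k+1)).factorial : ℚ)) := by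
      refine Finset.prod_congr rfl fun k hk => ?_
      rw [Finset.mem_range] at hk
      rw [strip_P Y k (by omega), strip_Q Y k (by omega)]
    have ePi : (∏ k ∈ range d', ∏ l ∈ range d', ((P (strip Y) k : ℚ) + (Q (strip Y) l : ℚ) + 1))
        = ∏ k ∈ range d', ∏ l ∈ range d', ((P Y (k+1) : ℚ) + (Q Y (l+1) : ℚ) + 1) := by
      refine Finset.prod_congr rfl fun k hk => Finset.prod_congr rfl fun l hl => ?_
      rw [Finset.mem_range] at hk hl
      rw [strip_P Y k (by omega), strip_Q Y l (by omega)]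
    rw [eH, eA, eB, ePi] at ihY'
    -- cast the row and column hook identities to ℚ
    have hrowN := row0_prod Y h0
    have hcolN := col0_prod Y h0
    have hrow : (∏ j ∈ range (Y.rowLen 0), (hk Y 0 j : ℚ)) *
        (∏ k ∈ Ico 1 (dg Y), ((P Y 0 : ℚ) - (P Y k : ℚ)))
        = ((P Y 0).factorial : ℚ) * ∏ k ∈ range (dg Y), ((P Y 0 : ℚ) + (Q Y k : ℚ) + 1) := by
      have e1 : ∀ k ∈ Ico 1 (dg Y), ((P Y 0 - P Y k : ℕ) : ℚ) = (P Y 0 : ℚ) - (P Y k : ℚ) :=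
        fun k hk => Nat.cast_sub (P_anti (Finset.mem_Ico.1 hk).1 (Finset.mem_Ico.1 hk).2).le
      calc (∏ j ∈ range (Y.rowLen 0), (hk Y 0 j : ℚ)) *
            (∏ k ∈ Ico 1 (dg Y), ((P Y 0 : ℚ) - (P Y k : ℚ)))
          = (((∏ j ∈ range (Y.rowLen 0), hk Y 0 j) *
            (∏ k ∈ Ico 1 (dg Y), (P Y 0 - P Y k)) : ℕ) : ℚ) := by
            push_cast
            congr 1
            exact (Finset.prod_congr rfl e1).symm
        _ = (((P Y 0).factorial * ∏ k ∈ range (dg Y), (P Y 0 + Q Y k + 1) : ℕ) : ℚ) := by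
            rw [hrowN]
        _ = ((P Y 0).factorial : ℚ) * ∏ k ∈ range (dg Y), ((P Y 0 : ℚ) + (Q Y k : ℚ) + 1) := by
            push_cast
            ring
    have hcol : (∏ i ∈ range (Y.colLen 0), (hk Y i 0 : ℚ)) *
        (∏ k ∈ Ico 1 (dg Y), ((Q Y 0 : ℚ) - (Q Y k : ℚ)))
        = ((Q Y 0).factorial : ℚ) * ∏ k ∈ range (dg Y), ((P Y k : ℚ) + (Q Y 0 : ℚ) + 1) := by
      have e1 : ∀ k ∈ Ico 1 (dg Y), ((Q Y 0 - Q Y k : ℕ) : ℚ) = (Q Y 0 : ℚ) - (Q Y k : ℚ) :=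
        fun k hk => Nat.cast_sub (Q_anti (Finset.mem_Ico.1 hk).1 (Finset.mem_Ico.1 hk).2).le
      calc (∏ i ∈ range (Y.colLen 0), (hk Y i 0 : ℚ)) *
            (∏ k ∈ Ico 1 (dg Y), ((Q Y 0 : ℚ) - (Q Y k : ℚ)))
          = (((∏ i ∈ range (Y.colLen 0), hk Y i 0) *
            (∏ k ∈ Ico 1 (dg Y), (Q Y 0 - Q Y k)) : ℕ) : ℚ) := by
            push_cast
            congr 1
            exact (Finset.prod_congr rfl e1).symm
        _ = (((Q Y 0).factorial * ∏ k ∈ range (dg Y), (P Y k + Q Y 0 + 1) : ℕ) : ℚ) := by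
            rw [hcolN]
        _ = ((Q Y 0).factorial : ℚ) * ∏ k ∈ range (dg Y), ((P Y k : ℚ) + (Q Y 0 : ℚ) + 1) := by
            push_cast
            ring
    -- split off the corner hook from the column product
    have hc0pos : 0 < Y.colLen 0 := YoungDiagram.mem_iff_lt_colLen.1 h0
    have hColFull : (∏ i ∈ range (Y.colLen 0), (hk Y i 0 : ℚ))
        = (hk Y 0 0 : ℚ) * ∏ i ∈ Ico 1 (Y.colLen 0), (hk Y i 0 : ℚ) := by
      rw [range_eq_Ico, Finset.prod_eq_prod_Ico_succ_bot hc0pos]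
    have hk00 : (hk Y 0 0 : ℚ) = (P Y 0 : ℚ) + (Q Y 0 : ℚ) + 1 := by
      have h1 := rowLen_diag hd1
      have h2 := colLen_diag hd1
      have : hk Y 0 0 = P Y 0 + Q Y 0 + 1 := by
        simp only [hk]; omega
      rw [this]; push_cast; ring
    -- split the cells product
    have hsplit : (∏ c ∈ Y.cells, (hk Y c.1 c.2 : ℚ)) =
        (∏ j ∈ range (Y.rowLen 0), (hk Y 0 j : ℚ)) *
        (∏ i ∈ Ico 1 (Y.colLen 0), (hk Y i 0 : ℚ)) *
        (∏ c ∈ (strip Y).cells, (hk Y (c.1 + 1) (c.2 + 1) : ℚ)) := by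
      simpa using cells_split Y h0 (fun c => (hk Y c.1 c.2 : ℚ))
    -- convert Ico products to shifted range products
    have eIco : ∀ f : ℕ → ℚ, ∏ k ∈ Ico 1 (d' + 1), f k = ∏ k ∈ range d', f (k + 1) := by
      intro f
      rw [Finset.prod_Ico_eq_prod_range]
      exact Finset.prod_congr (by norm_num) fun k _ => by rw [Nat.add_comm]
    rw [hd'] at hrow hcol ⊢
    rw [eIco (fun k => ((P Y 0 : ℚ) - (P Y k : ℚ)))] at hrow
    rw [eIco (fun k => ((Q Y 0 : ℚ) - (Q Y k : ℚ)))] at hcol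
    -- peel the index 0 from the range (d'+1) products in hrow, hcol
    rw [Finset.prod_range_succ' (fun k => ((P Y 0 : ℚ) + (Q Y k : ℚ) + 1)) d'] at hrow
    rw [Finset.prod_range_succ' (fun k => ((P Y k : ℚ) + (Q Y 0 : ℚ) + 1)) d'] at hcol
    -- decompositions of the goal's products
    have eA2 : (∏ k ∈ range (d' + 1), ∏ l ∈ range k,
          (((P Y l : ℚ) - (P Y k : ℚ)) * ((Q Y l : ℚ) - (Q Y k : ℚ))))
        = (∏ k ∈ range d', ∏ l ∈ range k,
            (((P Y (l+1) : ℚ) - (P Y (k+1) : ℚ)) * ((Q Y (l+1) : ℚ) - (Q Y (k+1) : ℚ)))) *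
          ((∏ k ∈ range d', ((P Y 0 : ℚ) - (P Y (k+1) : ℚ))) *
           (∏ k ∈ range d', ((Q Y 0 : ℚ) - (Q Y (k+1) : ℚ)))) := by
      rw [Finset.prod_range_succ' (fun k => ∏ l ∈ range k,
        (((P Y l : ℚ) - (P Y k : ℚ)) * ((Q Y l : ℚ) - (Q Y k : ℚ)))) d']
      simp only [Finset.range_zero, Finset.prod_empty, mul_one]
      rw [Finset.prod_congr rfl (fun k (_ : k ∈ range d') => Finset.prod_range_succ'
        (fun l => (((P Y l : ℚ) - (P Y (k+1) : ℚ)) * ((Q Y l : ℚ) - (Q Y (k+1) : ℚ)))) k)]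
      rw [Finset.prod_mul_distrib, Finset.prod_mul_distrib]
    have eB2 : (∏ k ∈ range (d' + 1), (((P Y k).factorial : ℚ) * ((Q Y k).factorial : ℚ)))
        = (∏ k ∈ range d', (((P Y (k+1)).factorial : ℚ) * ((Q Y (k+1)).factorial : ℚ))) *
          (((P Y 0).factorial : ℚ) * ((Q Y 0).factorial : ℚ)) :=
      Finset.prod_range_succ' (fun k => (((P Y k).factorial : ℚ) * ((Q Y k).factorial : ℚ))) d'
    have ePi2 : (∏ k ∈ range (d' + 1), ∏ l ∈ range (d' + 1), ((P Y k : ℚ) + (Q Y l : ℚ) + 1))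
        = ((∏ k ∈ range d', ∏ l ∈ range d', ((P Y (k+1) : ℚ) + (Q Y (l+1) : ℚ) + 1)) *
           (∏ k ∈ range d', ((P Y (k+1) : ℚ) + (Q Y 0 : ℚ) + 1))) *
          ((∏ l ∈ range d', ((P Y 0 : ℚ) + (Q Y (l+1) : ℚ) + 1)) *
           ((P Y 0 : ℚ) + (Q Y 0 : ℚ) + 1)) := by
      rw [Finset.prod_range_succ' (fun k => ∏ l ∈ range (d' + 1),
        ((P Y k : ℚ) + (Q Y l : ℚ) + 1)) d']
      rw [Finset.prod_congr rfl (fun k (_ : k ∈ range d') => Finset.prod_range_succ'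
        (fun l => ((P Y (k+1) : ℚ) + (Q Y l : ℚ) + 1)) d')]
      rw [Finset.prod_range_succ' (fun l => ((P Y 0 : ℚ) + (Q Y l : ℚ) + 1)) d']
      rw [Finset.prod_mul_distrib]
    rw [hsplit, eA2, eB2, ePi2]
    -- nonzeroness of the corner hook
    have hne : ((P Y 0 : ℚ) + (Q Y 0 : ℚ) + 1) ≠ 0 := by positivity
    rw [hColFull, hk00] at hcol
    -- combine everything
    apply mul_left_cancel₀ hne
    have key := congr_arg₂ (· * ·) (congr_arg₂ (· * ·) hrow hcol) ihY'
    linear_combination key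

lemma pair_fin_to_range {n : ℕ} (g : ℕ → ℕ → ℚ) :
    (∏ i : Fin n, ∏ j ∈ Ioi i, g i j) = ∏ k ∈ range n, ∏ l ∈ range k, g l k := by
  have stepA : ∀ i : Fin n, (∏ j ∈ Ioi i, g i j)
      = ∏ j : Fin n, (if (i : ℕ) < (j : ℕ) then g i j else 1) := by
    intro i
    rw [← Finset.prod_filter]
    congr 1
    ext j
    simp only [Finset.mem_Ioi, Finset.mem_filter, Finset.mem_univ, true_and]
    exact Fin.lt_def
  have stepB : ∀ k, k ∈ range n → (∏ l ∈ range k, g l k)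
      = ∏ l ∈ range n, (if l < k then g l k else 1) := by
    intro k hk
    rw [Finset.mem_range] at hk
    rw [← Finset.prod_filter]
    congr 1
    ext l
    simp only [Finset.mem_filter, Finset.mem_range]
    omega
  calc (∏ i : Fin n, ∏ j ∈ Ioi i, g i j)
      = ∏ i : Fin n, ∏ j : Fin n, (if (i : ℕ) < (j : ℕ) then g i j else 1) :=
        Finset.prod_congr rfl fun i _ => stepA i
    _ = ∏ k ∈ range n, ∏ l ∈ range n, (if k < l then g k l else 1) := by
        rw [← Fin.prod_univ_eq_prod_range (fun k => ∏ l ∈ range n, (if k < l then g k l else 1)) n]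
        refine Finset.prod_congr rfl fun i _ => ?_
        rw [← Fin.prod_univ_eq_prod_range (fun l => (if (i : ℕ) < l then g i l else 1)) n]
    _ = ∏ l ∈ range n, ∏ k ∈ range n, (if k < l then g k l else 1) := Finset.prod_comm
    _ = ∏ k ∈ range n, ∏ l ∈ range k, g l k :=
        Finset.prod_congr rfl fun k hk => (stepB k hk).symm


end HookAux

open HookAux in
/-- the determinantal identity for the product of hook lengths of a
Young diagram `Y` in terms of its Frobenius coordinates.  Cells are 0-indexed, so the
hook length of a cell `c = (i,j) ∈ Y` is `(colLen j − i) + (rowLen i − j) − 1`, the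
number `d` of diagonal boxes is the number of cells with `i = j`, and the Frobenius
coordinates are `p i = rowLen i − (i+1)`, `q i = colLen i − (i+1)` for `i = 0, …, d−1`. -/

theorem hook_length_frobenius_det (Y : YoungDiagram) (d : ℕ)
    (hd : d = (Y.cells.filter fun c => c.1 = c.2).card)
    (p q : Fin d → ℕ)
    (hp : ∀ i : Fin d, p i = Y.rowLen i - (i + 1))
    (hq : ∀ i : Fin d, q i = Y.colLen i - (i + 1)) :
    (∏ c ∈ Y.cells,
        (((Y.colLen c.2 - c.1) + (Y.rowLen c.1 - c.2) - 1 : ℕ) : ℚ))⁻¹ =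
      (∏ i : Fin d, ((Nat.factorial (p i) : ℚ) * (Nat.factorial (q i) : ℚ)))⁻¹ *
        Matrix.det (Matrix.of fun i j : Fin d => ((p i : ℚ) + (q j : ℚ) + 1)⁻¹) := by
  have hd2 : d = dg Y := hd
  subst hd2
  have hPp : ∀ i : Fin (dg Y), p i = P Y (i : ℕ) := fun i => hp i
  have hQq : ∀ i : Fin (dg Y), q i = Q Y (i : ℕ) := fun i => hq i
  have hH : (∏ c ∈ Y.cells, (((Y.colLen c.2 - c.1) + (Y.rowLen c.1 - c.2) - 1 : ℕ) : ℚ))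
      = ∏ c ∈ Y.cells, (hk Y c.1 c.2 : ℚ) := rfl
  set x : Fin (dg Y) → ℚ := fun i => (P Y (i : ℕ) : ℚ) with hx
  set y : Fin (dg Y) → ℚ := fun j => (Q Y (j : ℕ) : ℚ) + 1 with hy
  have hxy : ∀ i j, x i + y j ≠ 0 := fun i j => by
    have : (0:ℚ) ≤ (P Y (i : ℕ) : ℚ) := Nat.cast_nonneg _
    have : (0:ℚ) ≤ (Q Y (j : ℕ) : ℚ) := Nat.cast_nonneg _
    simp only [hx, hy]
    positivity
  have hyinj : Function.Injective y := by
    intro i j hij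
    simp only [hy] at hij
    have hQeq : Q Y (i : ℕ) = Q Y (j : ℕ) := by
      have h' := add_right_cancel hij
      exact_mod_cast h'
    rcases lt_trichotomy i j with h | h | h
    · exact absurd hQeq (Q_anti (Fin.lt_def.1 h) j.isLt).ne'
    · exact h
    · exact absurd hQeq (Q_anti (Fin.lt_def.1 h) i.isLt).ne
  have hcau := cauchy_det x y hxy hyinj
  have hPi : (∏ i, ∏ j, (x i + y j))
      = ∏ k ∈ range (dg Y), ∏ l ∈ range (dg Y), ((P Y k : ℚ) + (Q Y l : ℚ) + 1) := by
    rw [← Fin.prod_univ_eq_prod_range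
      (fun k => ∏ l ∈ range (dg Y), ((P Y k : ℚ) + (Q Y l : ℚ) + 1)) (dg Y)]
    refine Finset.prod_congr rfl fun i _ => ?_
    rw [← Fin.prod_univ_eq_prod_range (fun l => ((P Y (i : ℕ) : ℚ) + (Q Y l : ℚ) + 1)) (dg Y)]
    refine Finset.prod_congr rfl fun j _ => ?_
    simp only [hx, hy]
    ring
  have hpairs : (∏ i, ∏ j ∈ Ioi i, (x j - x i)) * (∏ i, ∏ j ∈ Ioi i, (y j - y i))
      = ∏ k ∈ range (dg Y), ∏ l ∈ range k,
          (((P Y l : ℚ) - (P Y k : ℚ)) * ((Q Y l : ℚ) - (Q Y k : ℚ))) := by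
    rw [← Finset.prod_mul_distrib]
    rw [Finset.prod_congr rfl (fun (i : Fin (dg Y)) (_ : i ∈ univ) =>
      (Finset.prod_mul_distrib (s := Ioi i) (f := fun j => x j - x i)
        (g := fun j => y j - y i)).symm)]
    rw [← pair_fin_to_range
      (fun a b => (((P Y a : ℚ) - (P Y b : ℚ)) * ((Q Y a : ℚ) - (Q Y b : ℚ))))]
    refine Finset.prod_congr rfl fun i _ => Finset.prod_congr rfl fun j _ => ?_
    simp only [hx, hy]
    ring
  have hFac : (∏ i : Fin (dg Y), ((Nat.factorial (p i) : ℚ) * (Nat.factorial (q i) : ℚ)))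
      = ∏ k ∈ range (dg Y), (((P Y k).factorial : ℚ) * ((Q Y k).factorial : ℚ)) := by
    rw [← Fin.prod_univ_eq_prod_range
      (fun k => (((P Y k).factorial : ℚ) * ((Q Y k).factorial : ℚ))) (dg Y)]
    exact Finset.prod_congr rfl fun i _ => by rw [hPp i, hQq i]
  have hdet : Matrix.det (Matrix.of fun i j : Fin (dg Y) => ((p i : ℚ) + (q j : ℚ) + 1)⁻¹)
      = Matrix.det (Matrix.of fun i j => (x i + y j)⁻¹) := by
    congr 1
    ext i j
    have : ((p i : ℚ) + (q j : ℚ) + 1) = x i + y j := by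
      simp only [hx, hy, hPp i, hQq j]
      ring
    simp only [Matrix.of_apply, this]
  have hHne : (∏ c ∈ Y.cells, (hk Y c.1 c.2 : ℚ)) ≠ 0 := by
    rw [Finset.prod_ne_zero_iff]
    intro c hc
    have h1 : 1 ≤ hk Y c.1 c.2 := hk_pos ((YoungDiagram.mem_cells c).1 hc)
    exact Nat.cast_ne_zero.2 (by omega)
  have hPine : (∏ k ∈ range (dg Y), ∏ l ∈ range (dg Y), ((P Y k : ℚ) + (Q Y l : ℚ) + 1)) ≠ 0 := by
    rw [Finset.prod_ne_zero_iff]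
    intro k _
    rw [Finset.prod_ne_zero_iff]
    intro l _
    positivity
  have hFacne : (∏ k ∈ range (dg Y), (((P Y k).factorial : ℚ) * ((Q Y k).factorial : ℚ))) ≠ 0 := by
    rw [Finset.prod_ne_zero_iff]
    intro k _
    have := (P Y k).factorial_pos
    have := (Q Y k).factorial_pos
    positivity
  have hmain := main_identity Y.cells.card Y le_rfl
  rw [hH, hFac, hdet]
  rw [hPi, hpairs] at hcau
  have h3 : (∏ c ∈ Y.cells, (hk Y c.1 c.2 : ℚ)) *
      Matrix.det (Matrix.of fun i j => (x i + y j)⁻¹)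
      = ∏ k ∈ range (dg Y), (((P Y k).factorial : ℚ) * ((Q Y k).factorial : ℚ)) := by
    apply mul_right_cancel₀ hPine
    linear_combination hmain + (∏ c ∈ Y.cells, (hk Y c.1 c.2 : ℚ)) * hcau
  field_simp [hHne, hFacne]
  simp only [one_div]
  linear_combination -h3
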